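/- Let x be a generic input point of the ReLU MLP with weights (H_1, …, H_L), and fix a hidden layer index l with 2 ≤ l ≤ L−1 and output/input indices i, j. Then there exists a neighborhood U of H_l in the space of n_l × n_{l-1} real matrices such that for every H ∈ U, the ReLU MLP obtained by replacing the l-th weight matrix H_l by H (keeping all other weights fixed) is Fréchet differentiable at x and the (i, j) entry of its Jacobian at x equals S_l^i ⬝ᵥ (H *ᵥ P_l^j), where P_l^j and S_l^i are computed from the original weights at x. -/

import Mathlib

noncomputable section

/-- Componentwise ReLU. -/
def relu {m : ℕ} (v : Fin m → ℝ) : Fin m → ℝ := fun i => max (v i) 0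

/-- Pre-activations of the ReLU MLP: `preact n H x l` is the paper's `a_{l+1}`,
i.e. `a_1 = H_1 x` is `preact n H x 0`, and `a_{l+1} = H_{l+1} g(a_l)`. -/
def preact (n : ℕ → ℕ) (H : (l : ℕ) → Matrix (Fin (n (l + 1))) (Fin (n l)) ℝ)
    (x : Fin (n 0) → ℝ) : (l : ℕ) → Fin (n (l + 1)) → ℝ
  | 0 => (H 0).mulVec x
  | l + 1 => (H (l + 1)).mulVec (relu (preact n H x l))

/-- Activation-pattern matrix: `Gmat n H x l` is the paper's `G_{l+2}`, the diagonal
matrix recording the sign pattern of the pre-activation `preact n H x l`. -/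
def Gmat (n : ℕ → ℕ) (H : (l : ℕ) → Matrix (Fin (n (l + 1))) (Fin (n l)) ℝ)
    (x : Fin (n 0) → ℝ) (l : ℕ) : Matrix (Fin (n (l + 1))) (Fin (n (l + 1))) ℝ :=
  Matrix.diagonal fun i => if 0 < preact n H x l i then (1 : ℝ) else 0

/-- The alternating matrix product `jacProd n H x l = H_{l+1} G_{l+1} H_l ⋯ G_2 H_1`. -/
def jacProd (n : ℕ → ℕ) (H : (l : ℕ) → Matrix (Fin (n (l + 1))) (Fin (n l)) ℝ)
    (x : Fin (n 0) → ℝ) : (l : ℕ) → Matrix (Fin (n (l + 1))) (Fin (n 0)) ℝ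
  | 0 => H 0
  | l + 1 => H (l + 1) * Gmat n H x l * jacProd n H x l

end

noncomputable section

/-- The tail matrix product `H_L G_L H_{L-1} ⋯ H_{l+1} G_{l+1}` of the paper, for a
network with `L = s + c + 3` layers and `l = s + 2`:
`tailProd n H x s c = (H (s+c+2) * Gmat (s+c+1)) * ⋯ * (H (s+2) * Gmat (s+1))`. -/
def tailProd (n : ℕ → ℕ) (H : (l : ℕ) → Matrix (Fin (n (l + 1))) (Fin (n l)) ℝ)
    (x : Fin (n 0) → ℝ) (s : ℕ) :
    (c : ℕ) → Matrix (Fin (n (s + c + 3))) (Fin (n (s + 2))) ℝ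
  | 0 => H (s + 2) * Gmat n H x (s + 1)
  | c + 1 => H (s + c + 3) * Gmat n H x (s + c + 2) * tailProd n H x s c

end

open Matrix

lemma continuous_relu {m : ℕ} : Continuous (relu (m := m)) :=
  continuous_pi fun i => (continuous_apply i).max continuous_const

lemma hasFDerivAt_relu {m : ℕ} (a : Fin m → ℝ) (ha : ∀ i, a i ≠ 0) :
    HasFDerivAt relu (LinearMap.toContinuousLinearMap
      (Matrix.diagonal fun i => if 0 < a i then (1:ℝ) else 0).mulVecLin) a := by
  rw [hasFDerivAt_pi']
  intro i
  rcases (ha i).lt_or_gt with h | h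
  · have hev : (fun v : Fin m → ℝ => relu v i) =ᶠ[nhds a] fun _ => (0:ℝ) := by
      have : {v : Fin m → ℝ | v i < 0} ∈ nhds a :=
        (isOpen_lt (continuous_apply i) continuous_const).mem_nhds h
      filter_upwards [this] with v hv
      simp [relu, max_eq_right hv.le]
    have h0 : HasFDerivAt (fun _ : Fin m → ℝ => (0:ℝ)) (0 : (Fin m → ℝ) →L[ℝ] ℝ) a :=
      hasFDerivAt_const _ _
    have := h0.congr_of_eventuallyEq hev
    refine this.congr_fderiv ?_
    ext v
    simp [Matrix.mulVec_diagonal, if_neg (not_lt.2 h.le), ContinuousLinearMap.proj]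
  · have hev : (fun v : Fin m → ℝ => relu v i) =ᶠ[nhds a] fun v => v i := by
      have : {v : Fin m → ℝ | 0 < v i} ∈ nhds a :=
        (isOpen_lt continuous_const (continuous_apply i)).mem_nhds h
      filter_upwards [this] with v hv
      simp [relu, max_eq_left hv.le]
    have h0 := hasFDerivAt_apply (𝕜 := ℝ) (F' := fun _ : Fin m => ℝ) i a
    have := h0.congr_of_eventuallyEq hev
    refine this.congr_fderiv ?_
    ext v
    simp [Matrix.mulVec_diagonal, if_pos h, ContinuousLinearMap.proj]

lemma preact_hasFDerivAt (n : ℕ → ℕ) (H : (l : ℕ) → Matrix (Fin (n (l + 1))) (Fin (n l)) ℝ)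
    (x : Fin (n 0) → ℝ) (m : ℕ) (hx : ∀ l < m, ∀ i, preact n H x l i ≠ 0) :
    HasFDerivAt (fun u => preact n H u m)
      (LinearMap.toContinuousLinearMap (jacProd n H x m).mulVecLin) x := by
  induction m with
  | zero =>
    exact (LinearMap.toContinuousLinearMap (H 0).mulVecLin).hasFDerivAt
  | succ m ih =>
    have hpre := ih (fun l hl => hx l (hl.trans (Nat.lt_succ_self m)))
    have hrelu := hasFDerivAt_relu (preact n H x m) (hx m (Nat.lt_succ_self m))
    have hlin := (LinearMap.toContinuousLinearMap (H (m+1)).mulVecLin).hasFDerivAt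
      (x := relu (preact n H x m))
    have hcomp := hlin.comp x (hrelu.comp x hpre)
    refine hcomp.congr_fderiv ?_
    ext v k
    simp [jacProd, Gmat, Matrix.mulVecLin_mul, Matrix.mulVec_mulVec]

section
variable (n : ℕ → ℕ) (H : (l : ℕ) → Matrix (Fin (n (l + 1))) (Fin (n l)) ℝ)
  (x : Fin (n 0) → ℝ) (s : ℕ)

lemma preact_update_eq (K : Matrix (Fin (n (s + 2))) (Fin (n (s + 1))) ℝ) :
    ∀ l ≤ s, preact n (Function.update H (s + 1) K) x l = preact n H x l := by
  intro l hl
  induction l with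
  | zero =>
    show (Function.update H (s+1) K 0).mulVec x = _
    rw [Function.update_of_ne (by omega)]
    rfl
  | succ l ih =>
    show (Function.update H (s+1) K (l+1)).mulVec
        (relu (preact n (Function.update H (s+1) K) x l)) = _
    rw [Function.update_of_ne (by omega), ih (by omega)]
    rfl

lemma jacProd_update_eq (K : Matrix (Fin (n (s + 2))) (Fin (n (s + 1))) ℝ) :
    ∀ l ≤ s, jacProd n (Function.update H (s + 1) K) x l = jacProd n H x l := by
  intro l hl
  induction l with
  | zero =>
    show Function.update H (s+1) K 0 = H 0
    exact Function.update_of_ne (by omega) _ _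
  | succ l ih =>
    show Function.update H (s+1) K (l+1) * Gmat n (Function.update H (s+1) K) x l *
        jacProd n (Function.update H (s+1) K) x l = _
    rw [Function.update_of_ne (by omega), ih (by omega)]
    unfold Gmat
    rw [preact_update_eq n H x s K l (by omega)]
    rfl

lemma preact_update_continuous :
    ∀ l, Continuous fun K : Matrix (Fin (n (s + 2))) (Fin (n (s + 1))) ℝ =>
      preact n (Function.update H (s + 1) K) x l := by
  intro l
  induction l with
  | zero =>
    have : (fun K : Matrix (Fin (n (s + 2))) (Fin (n (s + 1))) ℝ =>
        preact n (Function.update H (s + 1) K) x 0) =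
        fun _ => (H 0).mulVec x := by
      funext K
      show (Function.update H (s+1) K 0).mulVec x = _
      rw [Function.update_of_ne (by omega)]
    rw [this]; exact continuous_const
  | succ l ih =>
    have hc : Continuous fun K : Matrix (Fin (n (s + 2))) (Fin (n (s + 1))) ℝ =>
        relu (preact n (Function.update H (s + 1) K) x l) :=
      continuous_relu.comp ih
    by_cases h : l + 1 = s + 1
    · have hl : s = l := by omega
      subst hl
      have : (fun K : Matrix (Fin (s + 2 |> n)) (Fin (s + 1 |> n)) ℝ =>
          preact n (Function.update H (s + 1) K) x (s+1)) =
          fun K => K.mulVec (relu (preact n (Function.update H (s + 1) K) x s)) := by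
        funext K
        show (Function.update H (s+1) K (s+1)).mulVec _ = _
        rw [Function.update_self]
      rw [this]
      exact Continuous.matrix_mulVec continuous_id hc
    · have : (fun K : Matrix (Fin (n (s + 2))) (Fin (n (s + 1))) ℝ =>
          preact n (Function.update H (s + 1) K) x (l+1)) =
          fun K => (H (l+1)).mulVec (relu (preact n (Function.update H (s + 1) K) x l)) := by
        funext K
        show (Function.update H (s+1) K (l+1)).mulVec _ = _
        rw [Function.update_of_ne h]
      rw [this]
      exact Continuous.matrix_mulVec continuous_const hc

end

lemma jacProd_update_formula (n : ℕ → ℕ)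
    (H : (l : ℕ) → Matrix (Fin (n (l + 1))) (Fin (n l)) ℝ)
    (x : Fin (n 0) → ℝ) (s : ℕ) (K : Matrix (Fin (n (s + 2))) (Fin (n (s + 1))) ℝ)
    (c : ℕ)
    (hG : ∀ l ≤ s + c + 1, Gmat n (Function.update H (s + 1) K) x l = Gmat n H x l) :
    jacProd n (Function.update H (s + 1) K) x (s + c + 2) =
      tailProd n H x s c * (K * (Gmat n H x s * jacProd n H x s)) := by
  induction c with
  | zero =>
    have h1 : jacProd n (Function.update H (s + 1) K) x (s + 1) =
        K * (Gmat n H x s * jacProd n H x s) := by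
      show Function.update H (s+1) K (s+1) * Gmat n (Function.update H (s+1) K) x s *
          jacProd n (Function.update H (s+1) K) x s = _
      rw [Function.update_self, hG s (by omega),
        jacProd_update_eq n H x s K s le_rfl, Matrix.mul_assoc]
    show Function.update H (s+1) K (s+2) * Gmat n (Function.update H (s+1) K) x (s+1) *
        jacProd n (Function.update H (s+1) K) x (s+1) = _
    rw [Function.update_of_ne (by omega), hG (s+1) (by omega), h1]
    rfl
  | succ c ih =>
    show Function.update H (s+1) K (s+c+3) * Gmat n (Function.update H (s+1) K) x (s+c+2) *
        jacProd n (Function.update H (s+1) K) x (s+c+2) = _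
    rw [Function.update_of_ne (by omega), hG (s+c+2) (by omega),
      ih (fun l hl => hG l (by omega)), ← Matrix.mul_assoc]
    rfl

open Matrix in
/-- Let `x` be a generic input of the ReLU MLP with `L = s + c + 3 ≥ 3`
layers `H 0, …, H (s+c+2)` (the paper's `H_1, …, H_L`), and consider the hidden layer
with paper index `l = s + 2` (so `2 ≤ l ≤ L - 1`), whose weight matrix is `H (s+1)`.
Then for every matrix `K` in some neighborhood of `H (s+1)`, the MLP obtained by
replacing the `l`-th weight matrix by `K` is Fréchet differentiable at `x` and the
`(i, j)` entry of its Jacobian at `x` equals `S_l^i ⬝ᵥ (K *ᵥ P_l^j)`, where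
`P_l^j = G_l H_{l-1} ⋯ G_2 H_1^{(·,j)}` and `S_l^i = H_L^{(i,·)} G_L ⋯ H_{l+1} G_{l+1}`
are computed from the original weights at `x`. -/
theorem mlp_perturbed_jacobian_entry (s c : ℕ) (n : ℕ → ℕ) (hn : ∀ l, 0 < n l)
    (H : (l : ℕ) → Matrix (Fin (n (l + 1))) (Fin (n l)) ℝ)
    (x : Fin (n 0) → ℝ)
    (hx : ∀ l ≤ s + c + 1, ∀ i, preact n H x l i ≠ 0)
    (i : Fin (n (s + c + 3))) (j : Fin (n 0)) :
    ∃ U ∈ nhds (H (s + 1)), ∀ K ∈ U,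
      DifferentiableAt ℝ
        (fun u : Fin (n 0) → ℝ =>
          preact n (Function.update H (s + 1) K) u (s + c + 2)) x ∧
      fderiv ℝ
          (fun u : Fin (n 0) → ℝ =>
            preact n (Function.update H (s + 1) K) u (s + c + 2)) x
          (Pi.single j 1) i =
        (fun a => tailProd n H x s c i a) ⬝ᵥ
          K.mulVec ((Gmat n H x s).mulVec fun b => jacProd n H x s b j) := by
  -- the neighborhood of sign-preserving perturbations
  have hsingle : ∀ l ≤ s + c + 1, ∀ i' : Fin (n (l + 1)),
      ∀ᶠ K in nhds (H (s + 1)),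
        0 < preact n (Function.update H (s + 1) K) x l i' * preact n H x l i' := by
    intro l hl i'
    have hcont : Continuous fun K : Matrix (Fin (n (s + 2))) (Fin (n (s + 1))) ℝ =>
        preact n (Function.update H (s + 1) K) x l i' * preact n H x l i' :=
      (((continuous_apply i').comp (preact_update_continuous n H x s l)).mul
        continuous_const)
    have hval : 0 < preact n (Function.update H (s + 1) (H (s + 1))) x l i' *
        preact n H x l i' := by
      rw [Function.update_eq_self]
      exact mul_self_pos.mpr (hx l hl i')
    exact (hcont.tendsto _).eventually (eventually_gt_nhds hval)
  have hev : ∀ᶠ K in nhds (H (s + 1)), ∀ l : Fin (s + c + 2), ∀ i' : Fin (n (l.1 + 1)),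
      0 < preact n (Function.update H (s + 1) K) x l.1 i' * preact n H x l.1 i' :=
    Filter.eventually_all.2 fun l => Filter.eventually_all.2 fun i' =>
      hsingle l.1 (by omega) i'
  refine ⟨_, hev, ?_⟩
  intro K hK
  set H' := Function.update H (s + 1) K with hH'
  have hKs : ∀ l ≤ s + c + 1, ∀ i' : Fin (n (l + 1)),
      0 < preact n H' x l i' * preact n H x l i' := fun l hl i' =>
    hK ⟨l, by omega⟩ i'
  have hne' : ∀ l < s + c + 2, ∀ i', preact n H' x l i' ≠ 0 := by
    intro l hl i'
    exact left_ne_zero_of_mul (hKs l (by omega) i').ne'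
  have hG : ∀ l ≤ s + c + 1, Gmat n H' x l = Gmat n H x l := by
    intro l hl
    unfold Gmat
    have heq : (fun i'' => if 0 < preact n H' x l i'' then (1:ℝ) else 0) =
        (fun i'' => if 0 < preact n H x l i'' then (1:ℝ) else 0) := by
      funext i''
      have h := hKs l hl i''
      rcases mul_pos_iff.mp h with ⟨h1, h2⟩ | ⟨h1, h2⟩
      · rw [if_pos h1, if_pos h2]
      · rw [if_neg (not_lt.2 h1.le), if_neg (not_lt.2 h2.le)]
    rw [heq]
  have hasF := preact_hasFDerivAt n H' x (s + c + 2) hne'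
  refine ⟨hasF.differentiableAt, ?_⟩
  rw [hasF.fderiv]
  have hjac := jacProd_update_formula n H x s K c hG
  show ((jacProd n H' x (s + c + 2)).mulVec (Pi.single j 1)) i = _
  rw [Matrix.mulVec_single, hjac]
  simp only [MulOpposite.op_one, one_smul]
  simp [Matrix.mul_apply, Matrix.mulVec, dotProduct]
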